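/- In the |3|-graded split real Lie algebra g of type G₂ (with dim g_{±1} = dim g_{±3} = 2, dim g_{±2} = 1, dim g_0 = 4, and the structure: g_0 ≅ gl(g_{-1}), the bracket Λ²g_{±1} → g_{±2} an isomorphism, the bracket g_{±1} ⊗ g_{±2} → g_{±3} a perfect pairing-type isomorphism, g_i and g_{-i} dual g_0-modules), any proper graded Lie subalgebra b = ⊕_{i=-3}^3 b_i has dimension at most 9. -/

import Mathlib

/-- Abstract formulation of the `|3|`-graded split real Lie algebra of type `G₂`:
a real Lie algebra `L` with an internal grading `g : ℤ → Submodule ℝ L` supported in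
`[-3,3]`, with `dim g_{±1} = dim g_{±3} = 2`, `dim g_{±2} = 1`, `dim g_0 = 4`, such
that `g_0` acts faithfully on `g_{-1}` and surjects onto `gl(g_{-1})`, the brackets
`Λ²g_{±1} → g_{±2}` and `g_{±1} ⊗ g_{±2} → g_{±3}` span, bracketing with any nonzero
element of `g_{±2}` surjects `g_{∓1} → g_{±1}`, bracketing with any nonzero element
of `g_{±3}` surjects `g_{∓1} → g_{±2}`, and `g_i`, `g_{-i}` pair nondegenerately. -/
structure G2GradedData (L : Type*) [LieRing L] [LieAlgebra ℝ L]
    (g : ℤ → Submodule ℝ L) : Prop where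
  internal : DirectSum.IsInternal g
  supp : ∀ d : ℤ, 3 < |d| → g d = ⊥
  brGr : ∀ i j : ℤ, ∀ x ∈ g i, ∀ y ∈ g j, ⁅x, y⁆ ∈ g (i + j)
  dim1 : Module.finrank ℝ (g 1) = 2
  dim1' : Module.finrank ℝ (g (-1)) = 2
  dim2 : Module.finrank ℝ (g 2) = 1
  dim2' : Module.finrank ℝ (g (-2)) = 1
  dim3 : Module.finrank ℝ (g 3) = 2
  dim3' : Module.finrank ℝ (g (-3)) = 2
  dim0 : Module.finrank ℝ (g 0) = 4
  faithful0 : ∀ a ∈ g 0, (∀ x ∈ g (-1), ⁅a, x⁆ = (0 : L)) → a = 0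
  full0 : ∀ f : L →ₗ[ℝ] L, (∀ x ∈ g (-1), f x ∈ g (-1)) → (∀ x, f x ∈ g (-1)) →
    ∃ a ∈ g 0, ∀ x ∈ g (-1), ⁅a, x⁆ = f x
  lambda2 : ∀ s : ℤ, s = 1 ∨ s = -1 →
    g (2 * s) ≤ Submodule.span ℝ {z : L | ∃ x ∈ g s, ∃ y ∈ g s, z = ⁅x, y⁆}
  pair12 : ∀ s : ℤ, s = 1 ∨ s = -1 →
    g (3 * s) ≤ Submodule.span ℝ {z : L | ∃ x ∈ g s, ∃ y ∈ g (2 * s), z = ⁅x, y⁆}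
  surj2 : ∀ s : ℤ, s = 1 ∨ s = -1 → ∀ a ∈ g (2 * s), a ≠ 0 →
    ∀ z ∈ g s, ∃ x ∈ g (-s), ⁅a, x⁆ = z
  surj3 : ∀ s : ℤ, s = 1 ∨ s = -1 → ∀ a ∈ g (3 * s), a ≠ 0 →
    ∀ z ∈ g (2 * s), ∃ x ∈ g (-s), ⁅a, x⁆ = z
  dual : ∀ i : ℤ, i ≠ 0 → ∀ x ∈ g i, x ≠ 0 → ∃ y ∈ g (-i), ⁅x, y⁆ ≠ 0


namespace G2P

variable {L : Type*} [LieRing L] [LieAlgebra ℝ L]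

/-- Auxiliary data for the G2 proof: a basis `y1, y2` of `g (-1)`, realization of
arbitrary operators on `g (-1)` by elements of `g 0`, and coordinate functionals. -/
structure Aux (L : Type*) [LieRing L] [LieAlgebra ℝ L] (g : ℤ → Submodule ℝ L) where
  y1 : L
  y2 : L
  hy1 : y1 ∈ g (-1)
  hy2 : y2 ∈ g (-1)
  indep : ∀ c d : ℝ, c • y1 + d • y2 = 0 → c = 0 ∧ d = 0
  spans : ∀ z ∈ g (-1), ∃ c d : ℝ, z = c • y1 + d • y2
  realize : ∀ c11 c12 c21 c22 : ℝ, ∃ a ∈ g 0,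
    ⁅a, y1⁆ = c11 • y1 + c21 • y2 ∧ ⁅a, y2⁆ = c12 • y1 + c22 • y2
  tr : L →ₗ[ℝ] ℝ
  htr : ∀ (a : L) (p q r s : ℝ), ⁅a, y1⁆ = p • y1 + r • y2 →
    ⁅a, y2⁆ = q • y1 + s • y2 → tr a = p + s
  cq : L →ₗ[ℝ] ℝ
  hcq : ∀ (a : L) (p q r s : ℝ), ⁅a, y1⁆ = p • y1 + r • y2 →
    ⁅a, y2⁆ = q • y1 + s • y2 → cq a = q
  cr : L →ₗ[ℝ] ℝ
  hcr : ∀ (a : L) (p q r s : ℝ), ⁅a, y1⁆ = p • y1 + r • y2 →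
    ⁅a, y2⁆ = q • y1 + s • y2 → cr a = r

variable {g : ℤ → Submodule ℝ L}

theorem exists_aux (h : G2GradedData L g) : Nonempty (Aux L g) := by
  classical
  haveI : FiniteDimensional ℝ (g (-1)) := .of_finrank_pos (by rw [h.dim1']; norm_num)
  let B : Module.Basis (Fin 2) ℝ (g (-1)) := Module.finBasisOfFinrankEq ℝ _ h.dim1'
  set y1 : L := (B 0 : L) with hy1def
  set y2 : L := (B 1 : L) with hy2def
  have hy1 : y1 ∈ g (-1) := (B 0).2
  have hy2 : y2 ∈ g (-1) := (B 1).2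
  have indep : ∀ c d : ℝ, c • y1 + d • y2 = 0 → c = 0 ∧ d = 0 := by
    intro c d hcd
    have h0 : (c • B 0 + d • B 1 : g (-1)) = 0 := by
      apply Subtype.ext; simpa using hcd
    have hsum : ∑ i : Fin 2, (![c, d]) i • B i = 0 := by
      rw [Fin.sum_univ_two]; simpa using h0
    have := Fintype.linearIndependent_iff.mp B.linearIndependent ![c, d] hsum
    exact ⟨this 0, this 1⟩
  have spans : ∀ z ∈ g (-1), ∃ c d : ℝ, z = c • y1 + d • y2 := by
    intro z hz
    refine ⟨B.repr ⟨z, hz⟩ 0, B.repr ⟨z, hz⟩ 1, ?_⟩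
    have := B.sum_repr ⟨z, hz⟩
    rw [Fin.sum_univ_two] at this
    calc z = ((B.repr ⟨z, hz⟩ 0 • B 0 + B.repr ⟨z, hz⟩ 1 • B 1 : g (-1)) : L) := by
            rw [this]
      _ = _ := by push_cast; rfl
  -- complement and projection
  have hdisj : Disjoint (g (-1)) (⨆ (j : ℤ) (_ : j ≠ -1), g j) :=
    h.internal.submodule_iSupIndep (-1)
  have hcodis : Codisjoint (g (-1)) (⨆ (j : ℤ) (_ : j ≠ -1), g j) := by
    rw [codisjoint_iff_le_sup]
    rw [← h.internal.submodule_iSup_eq_top]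
    refine iSup_le fun j => ?_
    by_cases hj : j = -1
    · subst hj; exact le_sup_left
    · exact le_sup_of_le_right (le_iSup_of_le j (le_iSup_of_le hj le_rfl))
  have hcompl : IsCompl (g (-1)) (⨆ (j : ℤ) (_ : j ≠ -1), g j) := ⟨hdisj, hcodis⟩
  let π : L →ₗ[ℝ] g (-1) := Submodule.linearProjOfIsCompl _ _ hcompl
  have hπ1 : π y1 = B 0 := Submodule.linearProjOfIsCompl_apply_left hcompl (B 0)
  have hπ2 : π y2 = B 1 := Submodule.linearProjOfIsCompl_apply_left hcompl (B 1)
  have hπmem : ∀ (z : L) (hz : z ∈ g (-1)), π z = ⟨z, hz⟩ := fun z hz =>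
    Submodule.linearProjOfIsCompl_apply_left hcompl ⟨z, hz⟩
  -- realization
  have realize : ∀ c11 c12 c21 c22 : ℝ, ∃ a ∈ g 0,
      ⁅a, y1⁆ = c11 • y1 + c21 • y2 ∧ ⁅a, y2⁆ = c12 • y1 + c22 • y2 := by
    intro c11 c12 c21 c22
    set f : L →ₗ[ℝ] L :=
      ((B.coord 0).comp π).smulRight (c11 • y1 + c21 • y2) +
        ((B.coord 1).comp π).smulRight (c12 • y1 + c22 • y2) with hfdef
    have hfval : ∀ x : L, f x = (B.coord 0 (π x)) • (c11 • y1 + c21 • y2) +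
        (B.coord 1 (π x)) • (c12 • y1 + c22 • y2) := fun x => rfl
    have hmem : ∀ x : L, f x ∈ g (-1) := by
      intro x
      rw [hfval]
      exact add_mem (Submodule.smul_mem _ _ (add_mem (Submodule.smul_mem _ _ hy1) (Submodule.smul_mem _ _ hy2)))
        (Submodule.smul_mem _ _ (add_mem (Submodule.smul_mem _ _ hy1) (Submodule.smul_mem _ _ hy2)))
    have c00 : B.coord 0 (B 0) = 1 := by simp
    have c01 : B.coord 0 (B 1) = 0 := by simp
    have c10 : B.coord 1 (B 0) = 0 := by simp
    have c11' : B.coord 1 (B 1) = 1 := by simp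
    obtain ⟨a, ha0, ha⟩ := h.full0 f (fun x _ => hmem x) hmem
    refine ⟨a, ha0, ?_, ?_⟩
    · rw [ha y1 hy1, hfval, hπ1, c00, c10]
      simp
    · rw [ha y2 hy2, hfval, hπ2, c01, c11']
      simp
  -- coordinate functionals
  let brR : L → (L →ₗ[ℝ] L) := fun v => -((LieAlgebra.ad ℝ L v : L →ₗ[ℝ] L))
  have hbrR : ∀ (v a : L), brR v a = ⁅a, v⁆ := by
    intro v a
    show -((LieAlgebra.ad ℝ L v : L →ₗ[ℝ] L)) a = ⁅a, v⁆
    have h1 : ((LieAlgebra.ad ℝ L v : L →ₗ[ℝ] L)) a = ⁅v, a⁆ := rfl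
    show -(((LieAlgebra.ad ℝ L v : L →ₗ[ℝ] L)) a) = ⁅a, v⁆
    rw [h1]
    exact lie_skew a v
  let co : Fin 2 → (L →ₗ[ℝ] ℝ) := fun i => (B.coord i).comp π
  have hco : ∀ (i : Fin 2) (p r : ℝ), co i (p • y1 + r • y2) = (![p, r]) i := by
    intro i p r
    have hmem' : p • y1 + r • y2 ∈ g (-1) := add_mem (Submodule.smul_mem _ _ hy1) (Submodule.smul_mem _ _ hy2)
    have : (⟨p • y1 + r • y2, hmem'⟩ : g (-1)) = p • B 0 + r • B 1 := by
      apply Subtype.ext; push_cast; rfl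
    simp only [co, LinearMap.comp_apply, hπmem _ hmem', this]
    fin_cases i <;>
      simp [Module.Basis.coord_apply, Module.Basis.repr_self, Finsupp.single_apply]
  refine ⟨⟨y1, y2, hy1, hy2, indep, spans, realize,
    (co 0).comp (brR y1) + (co 1).comp (brR y2), ?_,
    (co 0).comp (brR y2), ?_,
    (co 1).comp (brR y1), ?_⟩⟩
  · intro a p q r s h1 h2
    simp only [LinearMap.add_apply, LinearMap.comp_apply, hbrR, h1, h2, hco]
    simp
  · intro a p q r s h1 h2
    simp only [LinearMap.comp_apply, hbrR, h2, hco]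
    simp
  · intro a p q r s h1 h2
    simp only [LinearMap.comp_apply, hbrR, h1, hco]
    simp




theorem br (h : G2GradedData L g) {i j k : ℤ} (hk : i + j = k) {x y : L}
    (hx : x ∈ g i) (hy : y ∈ g j) : ⁅x, y⁆ ∈ g k :=
  hk ▸ h.brGr i j x hx y hy

theorem brbot (h : G2GradedData L g) {i j : ℤ} {x y : L}
    (hx : x ∈ g i) (hy : y ∈ g j) (hij : 3 < |i + j|) : ⁅x, y⁆ = 0 := by
  have := h.brGr i j x hx y hy
  rw [h.supp _ hij] at this
  simpa using this

theorem faithful' (h : G2GradedData L g) (A : Aux L g) {a : L} (ha : a ∈ g 0)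
    (h1 : ⁅a, A.y1⁆ = 0) (h2 : ⁅a, A.y2⁆ = 0) : a = 0 := by
  refine h.faithful0 a ha fun z hz => ?_
  obtain ⟨c, d, rfl⟩ := A.spans z hz
  rw [lie_add, lie_smul, lie_smul, h1, h2, smul_zero, smul_zero, add_zero]

theorem acts_exists (h : G2GradedData L g) (A : Aux L g) {a : L} (ha : a ∈ g 0) :
    ∃ p q r s : ℝ, ⁅a, A.y1⁆ = p • A.y1 + r • A.y2 ∧ ⁅a, A.y2⁆ = q • A.y1 + s • A.y2 := by
  obtain ⟨p, r, h1⟩ := A.spans _ (br h (by norm_num) ha A.hy1)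
  obtain ⟨q, s, h2⟩ := A.spans _ (br h (by norm_num) ha A.hy2)
  exact ⟨p, q, r, s, h1, h2⟩

theorem eq_of_acts (h : G2GradedData L g) (A : Aux L g) {a b : L} (ha : a ∈ g 0)
    (hb : b ∈ g 0) (e1 : ⁅a, A.y1⁆ = ⁅b, A.y1⁆) (e2 : ⁅a, A.y2⁆ = ⁅b, A.y2⁆) : a = b := by
  have : a - b = 0 := faithful' h A (sub_mem ha hb)
    (by rw [sub_lie, e1, sub_self]) (by rw [sub_lie, e2, sub_self])
  rwa [sub_eq_zero] at this

theorem indep_eq (A : Aux L g) {c1 d1 c2 d2 : ℝ}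
    (heq : c1 • A.y1 + d1 • A.y2 = c2 • A.y1 + d2 • A.y2) : c1 = c2 ∧ d1 = d2 := by
  have expand : (c1 - c2) • A.y1 + (d1 - d2) • A.y2
      = (c1 • A.y1 + d1 • A.y2) - (c2 • A.y1 + d2 • A.y2) := by module
  have h0 : (c1 - c2) • A.y1 + (d1 - d2) • A.y2 = 0 := by rw [expand, heq, sub_self]
  obtain ⟨e1, e2⟩ := A.indep _ _ h0
  exact ⟨sub_eq_zero.mp e1, sub_eq_zero.mp e2⟩

theorem u0_mem (h : G2GradedData L g) (A : Aux L g) : ⁅A.y1, A.y2⁆ ∈ g (-2) :=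
  br h (by norm_num) A.hy1 A.hy2

theorem skew2 (A : Aux L g) : ⁅A.y2, A.y1⁆ = -⁅A.y1, A.y2⁆ := by
  rw [← lie_skew A.y1 A.y2, neg_neg]

theorem bilin_expand (A : Aux L g) (c1 d1 c2 d2 : ℝ) :
    ⁅c1 • A.y1 + d1 • A.y2, c2 • A.y1 + d2 • A.y2⁆
      = (c1 * d2 - d1 * c2) • ⁅A.y1, A.y2⁆ := by
  rw [add_lie, lie_add, lie_add, smul_lie, smul_lie, smul_lie, smul_lie,
    lie_smul, lie_smul, lie_smul, lie_smul, lie_self, lie_self, skew2 A]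
  module

theorem g2'_span (h : G2GradedData L g) (A : Aux L g) {v : L} (hv : v ∈ g (-2)) :
    ∃ c : ℝ, v = c • ⁅A.y1, A.y2⁆ := by
  have hle := h.lambda2 (-1) (Or.inr rfl)
  rw [show (2 : ℤ) * (-1) = -2 by norm_num] at hle
  have hsub : Submodule.span ℝ {z : L | ∃ x ∈ g (-1), ∃ y ∈ g (-1), z = ⁅x, y⁆}
      ≤ Submodule.span ℝ {⁅A.y1, A.y2⁆} := by
    rw [Submodule.span_le]
    rintro z ⟨x, hx, y, hy, rfl⟩
    obtain ⟨c1, d1, rfl⟩ := A.spans x hx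
    obtain ⟨c2, d2, rfl⟩ := A.spans y hy
    rw [bilin_expand]
    exact Submodule.mem_span_singleton.mpr ⟨_, rfl⟩
  obtain ⟨c, hc⟩ := Submodule.mem_span_singleton.mp (hsub (hle hv))
  exact ⟨c, hc.symm⟩

theorem u0_ne (h : G2GradedData L g) (A : Aux L g) : ⁅A.y1, A.y2⁆ ≠ 0 := by
  intro h0
  have hbot : g (-2) = ⊥ := by
    rw [eq_bot_iff]
    intro v hv
    obtain ⟨c, hc⟩ := g2'_span h A hv
    rw [hc, h0, smul_zero]
    exact Submodule.zero_mem ⊥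
  have := h.dim2'
  rw [hbot, finrank_bot] at this
  norm_num at this

theorem tr_action (h : G2GradedData L g) (A : Aux L g) {a : L} {p q r s : ℝ}
    (h1 : ⁅a, A.y1⁆ = p • A.y1 + r • A.y2) (h2 : ⁅a, A.y2⁆ = q • A.y1 + s • A.y2) :
    ⁅a, ⁅A.y1, A.y2⁆⁆ = (p + s) • ⁅A.y1, A.y2⁆ := by
  rw [leibniz_lie, h1, h2, add_lie, smul_lie, smul_lie, lie_add, lie_smul, lie_smul,
    lie_self, lie_self]
  module

theorem tr_action' (h : G2GradedData L g) (A : Aux L g) {a : L} (ha : a ∈ g 0) {v : L}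
    (hv : v ∈ g (-2)) : ⁅a, v⁆ = (A.tr a) • v := by
  obtain ⟨p, q, r, s, h1, h2⟩ := acts_exists h A ha
  obtain ⟨c, rfl⟩ := g2'_span h A hv
  rw [lie_smul, tr_action h A h1 h2, A.htr a p q r s h1 h2, smul_smul, smul_smul, mul_comm]


theorem w1_mem (h : G2GradedData L g) (A : Aux L g) : ⁅A.y1, ⁅A.y1, A.y2⁆⁆ ∈ g (-3) :=
  br h (by norm_num) A.hy1 (u0_mem h A)

theorem w2_mem (h : G2GradedData L g) (A : Aux L g) : ⁅A.y2, ⁅A.y1, A.y2⁆⁆ ∈ g (-3) :=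
  br h (by norm_num) A.hy2 (u0_mem h A)

theorem g3'_span (h : G2GradedData L g) (A : Aux L g) {w : L} (hw : w ∈ g (-3)) :
    ∃ c d : ℝ, w = c • ⁅A.y1, ⁅A.y1, A.y2⁆⁆ + d • ⁅A.y2, ⁅A.y1, A.y2⁆⁆ := by
  have hle := h.pair12 (-1) (Or.inr rfl)
  rw [show (3 : ℤ) * (-1) = -3 by norm_num, show (2 : ℤ) * (-1) = -2 by norm_num] at hle
  have hsub : Submodule.span ℝ {z : L | ∃ x ∈ g (-1), ∃ y ∈ g (-2), z = ⁅x, y⁆}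
      ≤ Submodule.span ℝ {⁅A.y1, ⁅A.y1, A.y2⁆⁆, ⁅A.y2, ⁅A.y1, A.y2⁆⁆} := by
    rw [Submodule.span_le]
    rintro z ⟨x, hx, y, hy, rfl⟩
    obtain ⟨c1, d1, rfl⟩ := A.spans x hx
    obtain ⟨c, rfl⟩ := g2'_span h A hy
    refine Submodule.mem_span_pair.mpr ⟨c1 * c, d1 * c, ?_⟩
    rw [add_lie, smul_lie, smul_lie, lie_smul, lie_smul, smul_smul, smul_smul]
  obtain ⟨c, d, hcd⟩ := Submodule.mem_span_pair.mp (hsub (hle hw))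
  exact ⟨c, d, hcd.symm⟩

theorem indep_w (h : G2GradedData L g) (A : Aux L g) (c d : ℝ)
    (hcd : c • ⁅A.y1, ⁅A.y1, A.y2⁆⁆ + d • ⁅A.y2, ⁅A.y1, A.y2⁆⁆ = 0) : c = 0 ∧ d = 0 := by
  haveI : FiniteDimensional ℝ (g (-3)) := .of_finrank_pos (by rw [h.dim3']; norm_num)
  by_contra hne
  have key : ∀ v : L, g (-3) ≤ Submodule.span ℝ {v} → False := by
    intro v hv
    have h1 : (2 : ℕ) ≤ Module.finrank ℝ (Submodule.span ℝ ({v} : Set L)) := by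
      rw [← h.dim3']
      exact Submodule.finrank_mono hv
    have h2 : Module.finrank ℝ (Submodule.span ℝ ({v} : Set L)) ≤ 1 := by
      by_cases hv0 : v = 0
      · subst hv0
        rw [Submodule.span_zero_singleton, finrank_bot]
        norm_num
      · rw [finrank_span_singleton hv0]
    omega
  rcases not_and_or.mp hne with hc | hd
  · -- c ≠ 0 : w1 = (-d/c) • w2
    apply key ⁅A.y2, ⁅A.y1, A.y2⁆⁆
    intro w hw
    obtain ⟨c', d', rfl⟩ := g3'_span h A hw
    have e1 : c • ⁅A.y1, ⁅A.y1, A.y2⁆⁆ = (-d) • ⁅A.y2, ⁅A.y1, A.y2⁆⁆ := by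
      rw [neg_smul]
      exact eq_neg_of_add_eq_zero_left hcd
    have hw1 : ⁅A.y1, ⁅A.y1, A.y2⁆⁆ = (-d / c) • ⁅A.y2, ⁅A.y1, A.y2⁆⁆ := by
      calc ⁅A.y1, ⁅A.y1, A.y2⁆⁆ = c⁻¹ • (c • ⁅A.y1, ⁅A.y1, A.y2⁆⁆) := by
            rw [smul_smul, inv_mul_cancel₀ hc, one_smul]
        _ = c⁻¹ • ((-d) • ⁅A.y2, ⁅A.y1, A.y2⁆⁆) := by rw [e1]
        _ = (-d / c) • ⁅A.y2, ⁅A.y1, A.y2⁆⁆ := by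
            rw [smul_smul]; congr 1; field_simp
    rw [hw1, smul_smul, ← add_smul]
    exact Submodule.mem_span_singleton.mpr ⟨_, rfl⟩
  · apply key ⁅A.y1, ⁅A.y1, A.y2⁆⁆
    intro w hw
    obtain ⟨c', d', rfl⟩ := g3'_span h A hw
    have e1 : d • ⁅A.y2, ⁅A.y1, A.y2⁆⁆ = (-c) • ⁅A.y1, ⁅A.y1, A.y2⁆⁆ := by
      rw [neg_smul]
      exact eq_neg_of_add_eq_zero_right hcd
    have hw2 : ⁅A.y2, ⁅A.y1, A.y2⁆⁆ = (-c / d) • ⁅A.y1, ⁅A.y1, A.y2⁆⁆ := by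
      calc ⁅A.y2, ⁅A.y1, A.y2⁆⁆ = d⁻¹ • (d • ⁅A.y2, ⁅A.y1, A.y2⁆⁆) := by
            rw [smul_smul, inv_mul_cancel₀ hd, one_smul]
        _ = d⁻¹ • ((-c) • ⁅A.y1, ⁅A.y1, A.y2⁆⁆) := by rw [e1]
        _ = (-c / d) • ⁅A.y1, ⁅A.y1, A.y2⁆⁆ := by
            rw [smul_smul]; congr 1; field_simp
    rw [hw2, smul_smul, ← add_smul, add_comm]
    exact Submodule.mem_span_singleton.mpr ⟨_, rfl⟩

theorem beta_inj (h : G2GradedData L g) (A : Aux L g) {z : L} (hz : z ∈ g (-1))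
    (h0 : ⁅z, ⁅A.y1, A.y2⁆⁆ = 0) : z = 0 := by
  obtain ⟨c, d, rfl⟩ := A.spans z hz
  rw [add_lie, smul_lie, smul_lie] at h0
  obtain ⟨hc, hd⟩ := indep_w h A c d h0
  rw [hc, hd, zero_smul, zero_smul, add_zero]

theorem equiv_m3 (h : G2GradedData L g) (A : Aux L g) {a : L} (ha : a ∈ g 0) (z : L) :
    ⁅a, ⁅z, ⁅A.y1, A.y2⁆⁆⁆ = ⁅⁅a, z⁆, ⁅A.y1, A.y2⁆⁆ + (A.tr a) • ⁅z, ⁅A.y1, A.y2⁆⁆ := by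
  rw [leibniz_lie, tr_action' h A ha (u0_mem h A), lie_smul]

theorem kernel_vec (h : G2GradedData L g) (A : Aux L g) {x : L} (hx : x ∈ g 1) :
    ∃ z, z ∈ g (-1) ∧ z ≠ 0 ∧ ∀ y ∈ g (-1),
      ⁅⁅x, y⁆, z⁆ = -(A.tr ⁅x, y⁆) • z := by
  obtain ⟨c1, hc1⟩ := g2'_span h A (br h (show (1 : ℤ) + -3 = -2 by norm_num) hx (w1_mem h A))
  obtain ⟨c2, hc2⟩ := g2'_span h A (br h (show (1 : ℤ) + -3 = -2 by norm_num) hx (w2_mem h A))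
  have y1ne : A.y1 ≠ 0 := by
    intro h0
    have := A.indep 1 0 (by rw [h0]; module)
    norm_num at this
  -- choose z with ⁅x, ⁅z,u0⁆⁆ = 0
  have main : ∀ z, z ∈ g (-1) → z ≠ 0 → ⁅x, ⁅z, ⁅A.y1, A.y2⁆⁆⁆ = 0 →
      ∃ z', z' ∈ g (-1) ∧ z' ≠ 0 ∧ ∀ y ∈ g (-1),
        ⁅⁅x, y⁆, z'⁆ = -(A.tr ⁅x, y⁆) • z' := by
    intro z hz hzne hzx
    refine ⟨z, hz, hzne, fun y hy => ?_⟩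
    have ha : ⁅x, y⁆ ∈ g 0 := br h (show (1 : ℤ) + -1 = 0 by norm_num) hx hy
    have step1 : ⁅⁅x, y⁆, ⁅z, ⁅A.y1, A.y2⁆⁆⁆ = 0 := by
      rw [lie_lie, hzx, lie_zero, sub_zero]
      have hzu : ⁅z, ⁅A.y1, A.y2⁆⁆ ∈ g (-3) := br h (by norm_num) hz (u0_mem h A)
      rw [brbot h hy hzu (by norm_num), lie_zero]
    rw [equiv_m3 h A ha] at step1
    have step2 : ⁅⁅⁅x, y⁆, z⁆ + (A.tr ⁅x, y⁆) • z, ⁅A.y1, A.y2⁆⁆ = 0 := by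
      rw [add_lie, smul_lie]; exact step1
    have hmem : ⁅⁅x, y⁆, z⁆ + (A.tr ⁅x, y⁆) • z ∈ g (-1) :=
      add_mem (br h (show (0 : ℤ) + -1 = -1 by norm_num) ha hz) (Submodule.smul_mem _ _ hz)
    have := beta_inj h A hmem step2
    have : ⁅⁅x, y⁆, z⁆ = -((A.tr ⁅x, y⁆) • z) := by
      rw [← sub_eq_zero]; rw [sub_neg_eq_add]; exact this
    rw [this, neg_smul]
  by_cases hc : c1 = 0
  · refine main A.y1 A.hy1 y1ne ?_
    rw [hc1, hc, zero_smul]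
  · refine main (c2 • A.y1 - c1 • A.y2) ?_ ?_ ?_
    · exact sub_mem (Submodule.smul_mem _ _ A.hy1) (Submodule.smul_mem _ _ A.hy2)
    · intro h0
      have : c2 • A.y1 + (-c1) • A.y2 = 0 := by rw [← h0]; module
      exact hc (neg_eq_zero.mp (A.indep c2 (-c1) this).2)
    · rw [sub_lie, smul_lie, smul_lie, lie_sub, lie_smul, lie_smul, hc1, hc2,
        smul_smul, smul_smul, mul_comm c2 c1, sub_self]


theorem nonbot (p : Submodule ℝ L) (hp : 0 < Module.finrank ℝ p) : ∃ x ∈ p, x ≠ 0 := by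
  by_contra hcon
  push_neg at hcon
  have : p = ⊥ := by
    rw [eq_bot_iff]; intro v hv
    rcases eq_or_ne v 0 with h | h
    · simpa [h] using Submodule.zero_mem (⊥ : Submodule ℝ L)
    · exact absurd h (not_ne_iff.mpr (hcon v hv))
  rw [this, finrank_bot] at hp
  omega

theorem pair_basis (p : Submodule ℝ L) (hp : Module.finrank ℝ p = 2) :
    ∃ v w : L, v ∈ p ∧ w ∈ p ∧ (∀ c d : ℝ, c • v + d • w = 0 → c = 0 ∧ d = 0) ∧
      ∀ z ∈ p, ∃ c d : ℝ, z = c • v + d • w := by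
  haveI : FiniteDimensional ℝ p := .of_finrank_pos (by rw [hp]; norm_num)
  let B : Module.Basis (Fin 2) ℝ p := Module.finBasisOfFinrankEq ℝ _ hp
  refine ⟨(B 0 : L), (B 1 : L), (B 0).2, (B 1).2, ?_, ?_⟩
  · intro c d hcd
    have h0 : (c • B 0 + d • B 1 : p) = 0 := by
      apply Subtype.ext; simpa using hcd
    have hsum : ∑ i : Fin 2, (![c, d]) i • B i = 0 := by
      rw [Fin.sum_univ_two]; simpa using h0
    have := Fintype.linearIndependent_iff.mp B.linearIndependent ![c, d] hsum
    exact ⟨this 0, this 1⟩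
  · intro z hz
    refine ⟨B.repr ⟨z, hz⟩ 0, B.repr ⟨z, hz⟩ 1, ?_⟩
    have := B.sum_repr ⟨z, hz⟩
    rw [Fin.sum_univ_two] at this
    calc z = ((B.repr ⟨z, hz⟩ 0 • B 0 + B.repr ⟨z, hz⟩ 1 • B 1 : p) : L) := by rw [this]
      _ = _ := by push_cast; rfl

/-- Commutator action formula: matrix commutator in coordinates. -/
theorem lie_acts (h : G2GradedData L g) (A : Aux L g) {a b : L}
    {pa qa ra sa pb qb rb sb : ℝ}
    (ha1 : ⁅a, A.y1⁆ = pa • A.y1 + ra • A.y2) (ha2 : ⁅a, A.y2⁆ = qa • A.y1 + sa • A.y2)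
    (hb1 : ⁅b, A.y1⁆ = pb • A.y1 + rb • A.y2) (hb2 : ⁅b, A.y2⁆ = qb • A.y1 + sb • A.y2) :
    ⁅⁅a, b⁆, A.y1⁆ = (pa * pb + qa * rb - (pb * pa + qb * ra)) • A.y1
        + (ra * pb + sa * rb - (rb * pa + sb * ra)) • A.y2
      ∧ ⁅⁅a, b⁆, A.y2⁆ = (pa * qb + qa * sb - (pb * qa + qb * sa)) • A.y1
        + (ra * qb + sa * sb - (rb * qa + sb * sa)) • A.y2 := by
  constructor
  · rw [lie_lie, hb1, ha1, lie_add, lie_smul, lie_smul, ha1, ha2,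
      lie_add, lie_smul, lie_smul, hb1, hb2]
    module
  · rw [lie_lie, hb2, ha2, lie_add, lie_smul, lie_smul, ha1, ha2,
      lie_add, lie_smul, lie_smul, hb1, hb2]
    module

theorem Qlem (h : G2GradedData L g) :
    g 0 ≤ Submodule.span ℝ {z : L | ∃ x ∈ g 1, ∃ y ∈ g (-1), z = ⁅x, y⁆} := by
  obtain ⟨A⟩ := exists_aux h
  set m := Submodule.span ℝ {z : L | ∃ x ∈ g 1, ∃ y ∈ g (-1), z = ⁅x, y⁆} with hm
  obtain ⟨E, hE0, hE1, hE2⟩ := A.realize 0 1 0 0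
  obtain ⟨F, hF0, hF1, hF2⟩ := A.realize 0 0 1 0
  obtain ⟨h0, hh00, hh01, hh02⟩ := A.realize 1 0 0 1
  have y1ne : A.y1 ≠ 0 := by
    intro h0'
    have := A.indep 1 0 (by rw [h0']; module)
    norm_num at this
  -- the element H' = ⁅E, F⁆
  set H' := ⁅E, F⁆ with hH'
  have hHg0 : H' ∈ g 0 := br h (by norm_num) hE0 hF0
  obtain ⟨hH1', hH2'⟩ := lie_acts h A hE1 hE2 hF1 hF2
  have hH1 : ⁅H', A.y1⁆ = (1 : ℝ) • A.y1 + (0 : ℝ) • A.y2 := by rw [hH1']; norm_num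
  have hH2 : ⁅H', A.y2⁆ = (0 : ℝ) • A.y1 + (-1 : ℝ) • A.y2 := by rw [hH2']; norm_num
  -- membership of generators
  have hgen : ∀ x ∈ g 1, ∀ y ∈ g (-1), ⁅x, y⁆ ∈ m := fun x hx y hy =>
    Submodule.subset_span ⟨x, hx, y, hy, rfl⟩
  -- m is stable under bracketing with g 0
  have m_lie : ∀ a ∈ g 0, ∀ c ∈ m, ⁅a, c⁆ ∈ m := by
    intro a ha c hc
    induction hc using Submodule.span_induction with
    | mem z hz =>
      obtain ⟨x, hx, y, hy, rfl⟩ := hz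
      rw [leibniz_lie]
      exact Submodule.add_mem _
        (hgen _ (br h (by norm_num) ha hx) _ hy)
        (hgen _ hx _ (br h (by norm_num) ha hy))
    | zero => rw [lie_zero]; exact Submodule.zero_mem _
    | add u v hu hv hu' hv' => rw [lie_add]; exact Submodule.add_mem _ hu' hv'
    | smul t u hu hu' => rw [lie_smul]; exact Submodule.smul_mem _ _ hu'
  -- step A : nonscalar bracket exists
  have nonscalar : ∃ c ∈ g 0, c ∈ m ∧ ∃ p q r s : ℝ,
      ⁅c, A.y1⁆ = p • A.y1 + r • A.y2 ∧ ⁅c, A.y2⁆ = q • A.y1 + s • A.y2 ∧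
      (q ≠ 0 ∨ r ≠ 0 ∨ p ≠ s) := by
    by_contra hcon
    push_neg at hcon
    obtain ⟨x0, hx0, hx0ne⟩ := nonbot (g 1) (by rw [h.dim1]; norm_num)
    obtain ⟨z, hz, hzne, hzprop⟩ := kernel_vec h A hx0
    have hall0 : ∀ y ∈ g (-1), ⁅x0, y⁆ = 0 := by
      intro y hy
      have hc0 : ⁅x0, y⁆ ∈ g 0 := br h (by norm_num) hx0 hy
      obtain ⟨p, q, r, s, h1, h2⟩ := acts_exists h A hc0
      obtain ⟨hq, hr, hps⟩ := hcon ⁅x0, y⁆ hc0 (hgen _ hx0 _ hy) p q r s h1 h2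
      have htr := A.htr _ p q r s h1 h2
      obtain ⟨cz, dz, hzeq⟩ := A.spans z hz
      have hscal : ⁅⁅x0, y⁆, z⁆ = p • z := by
        rw [hzeq, lie_add, lie_smul, lie_smul, h1, h2, hq, hr, ← hps]
        module
      have hker := hzprop y hy
      rw [hscal, htr, ← hps] at hker
      have h3p : (3 * p) • z = 0 := by
        have : p • z - (-(p + p)) • z = 0 := by rw [← hker]; module
        rw [← this]; module
      have hp0 : p = 0 := by
        rcases smul_eq_zero.mp h3p with h' | h'
        · linarith
        · exact absurd h' hzne
      refine faithful' h A hc0 ?_ ?_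
      · rw [h1, hp0, hr]; module
      · rw [h2, hq, ← hps, hp0]; module
    obtain ⟨yy, hyy, hyne⟩ := h.dual 1 (by norm_num) x0 hx0 hx0ne
    rw [show -(1 : ℤ) = -1 by norm_num] at hyy
    exact hyne (hall0 yy hyy)
  -- step C : E, F, H' ∈ m
  have hEFH : E ∈ m ∧ F ∈ m ∧ H' ∈ m := by
    have fromE : E ∈ m → E ∈ m ∧ F ∈ m ∧ H' ∈ m := by
      intro hEm
      have hFEm : ⁅F, E⁆ ∈ m := m_lie F hF0 E hEm
      have hHm : H' ∈ m := by
        have : H' = -⁅F, E⁆ := by rw [hH', ← lie_skew]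
        rw [this]; exact Submodule.neg_mem _ hFEm
      have hFHm : ⁅F, H'⁆ ∈ m := m_lie F hF0 H' hHm
      obtain ⟨e1, e2⟩ := lie_acts h A hF1 hF2 hH1 hH2
      have hFH : ⁅F, H'⁆ = (2 : ℝ) • F := by
        refine eq_of_acts h A (br h (by norm_num) hF0 hHg0) (Submodule.smul_mem _ _ hF0) ?_ ?_
        · rw [e1, smul_lie, hF1]; module
        · rw [e2, smul_lie, hF2]; module
      have : F = (2 : ℝ)⁻¹ • ⁅F, H'⁆ := by rw [hFH, smul_smul]; norm_num
      exact ⟨hEm, by rw [this]; exact Submodule.smul_mem _ _ hFHm, hHm⟩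
    have fromF : F ∈ m → E ∈ m ∧ F ∈ m ∧ H' ∈ m := by
      intro hFm
      have hHm : H' ∈ m := m_lie E hE0 F hFm
      have hEHm : ⁅E, H'⁆ ∈ m := m_lie E hE0 H' hHm
      obtain ⟨e1, e2⟩ := lie_acts h A hE1 hE2 hH1 hH2
      have hEH : ⁅E, H'⁆ = (-2 : ℝ) • E := by
        refine eq_of_acts h A (br h (by norm_num) hE0 hHg0) (Submodule.smul_mem _ _ hE0) ?_ ?_
        · rw [e1, smul_lie, hE1]; module
        · rw [e2, smul_lie, hE2]; module
      have : E = (-2 : ℝ)⁻¹ • ⁅E, H'⁆ := by rw [hEH, smul_smul]; norm_num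
      exact ⟨by rw [this]; exact Submodule.smul_mem _ _ hEHm, hFm, hHm⟩
    obtain ⟨c, hc0, hcm, p, q, r, s, h1, h2, hcase⟩ := nonscalar
    by_cases hq : q = 0
    swap
    · -- use ⁅F, ⁅F, c⁆⁆ = (-2 q) • F
      apply fromF
      have hFc0 : ⁅F, c⁆ ∈ g 0 := br h (by norm_num) hF0 hc0
      obtain ⟨e1, e2⟩ := lie_acts h A hF1 hF2 h1 h2
      have hFFc0 : ⁅F, ⁅F, c⁆⁆ ∈ g 0 := br h (by norm_num) hF0 hFc0
      obtain ⟨f1, f2⟩ := lie_acts h A hF1 hF2 e1 e2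
      have key : ⁅F, ⁅F, c⁆⁆ = (-2 * q) • F := by
        refine eq_of_acts h A hFFc0 (Submodule.smul_mem _ _ hF0) ?_ ?_
        · rw [f1, smul_lie, hF1]; module
        · rw [f2, smul_lie, hF2]; module
      have hFm : F = (-2 * q)⁻¹ • ⁅F, ⁅F, c⁆⁆ := by
        rw [key, smul_smul, inv_mul_cancel₀ (by simpa using hq), one_smul]
      rw [hFm]
      exact Submodule.smul_mem _ _ (m_lie F hF0 _ (m_lie F hF0 c hcm))
    by_cases hr : r = 0
    swap
    · apply fromE
      have hEc0 : ⁅E, c⁆ ∈ g 0 := br h (by norm_num) hE0 hc0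
      obtain ⟨e1, e2⟩ := lie_acts h A hE1 hE2 h1 h2
      have hEEc0 : ⁅E, ⁅E, c⁆⁆ ∈ g 0 := br h (by norm_num) hE0 hEc0
      obtain ⟨f1, f2⟩ := lie_acts h A hE1 hE2 e1 e2
      have key : ⁅E, ⁅E, c⁆⁆ = (-2 * r) • E := by
        refine eq_of_acts h A hEEc0 (Submodule.smul_mem _ _ hE0) ?_ ?_
        · rw [f1, smul_lie, hE1]; module
        · rw [f2, smul_lie, hE2]; module
      have hEm : E = (-2 * r)⁻¹ • ⁅E, ⁅E, c⁆⁆ := by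
        rw [key, smul_smul, inv_mul_cancel₀ (by simpa using hr), one_smul]
      rw [hEm]
      exact Submodule.smul_mem _ _ (m_lie E hE0 _ (m_lie E hE0 c hcm))
    · have hps : p ≠ s := by
        rcases hcase with h' | h' | h'
        · exact absurd hq h'
        · exact absurd hr h'
        · exact h'
      apply fromE
      have hEc0 : ⁅E, c⁆ ∈ g 0 := br h (by norm_num) hE0 hc0
      obtain ⟨e1, e2⟩ := lie_acts h A hE1 hE2 h1 h2
      rw [hq, hr] at e1 e2
      have key : ⁅E, c⁆ = (s - p) • E := by
        refine eq_of_acts h A hEc0 (Submodule.smul_mem _ _ hE0) ?_ ?_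
        · rw [e1, smul_lie, hE1]; module
        · rw [e2, smul_lie, hE2]; module
      have hEm : E = (s - p)⁻¹ • ⁅E, c⁆ := by
        rw [key, smul_smul, inv_mul_cancel₀ (sub_ne_zero.mpr (Ne.symm hps)), one_smul]
      rw [hEm]
      exact Submodule.smul_mem _ _ (m_lie E hE0 c hcm)
  obtain ⟨hEmm, hFmm, hHmm⟩ := hEFH
  -- step D : there is a bracket with nonzero trace
  have trful : ∃ c ∈ g 0, c ∈ m ∧ A.tr c ≠ 0 := by
    by_contra hcon
    push_neg at hcon
    -- all brackets are traceless
    obtain ⟨x1, x2, hx1, hx2, hxind, hxspan⟩ := pair_basis (g 1) h.dim1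
    have hx1ne : x1 ≠ 0 := fun h0 => by
      have := hxind 1 0 (by rw [h0]; module); norm_num at this
    have hx2ne : x2 ≠ 0 := fun h0 => by
      have := hxind 0 1 (by rw [h0]; module); norm_num at this
    obtain ⟨z1, hz1, hz1ne, hzp1⟩ := kernel_vec h A hx1
    obtain ⟨z2, hz2, hz2ne, hzp2⟩ := kernel_vec h A hx2
    -- the constraint subspaces
    let brR : L → (L →ₗ[ℝ] L) := fun v => -((LieAlgebra.ad ℝ L v : L →ₗ[ℝ] L))
    have hbrR : ∀ (v a : L), brR v a = ⁅a, v⁆ := by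
      intro v a
      have h1 : ((LieAlgebra.ad ℝ L v : L →ₗ[ℝ] L)) a = ⁅v, a⁆ := rfl
      show -(((LieAlgebra.ad ℝ L v : L →ₗ[ℝ] L)) a) = ⁅a, v⁆
      rw [h1]
      exact lie_skew a v
    let K : L → Submodule ℝ L := fun z =>
      (g 0 ⊓ LinearMap.ker (brR z)) ⊓ LinearMap.ker A.tr
    haveI : FiniteDimensional ℝ (g 0) := .of_finrank_pos (by rw [h.dim0]; norm_num)
    have hKle : ∀ z, K z ≤ g 0 := fun z => inf_le_left.trans inf_le_left
    haveI hKfd : ∀ z, FiniteDimensional ℝ (K z) := fun z =>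
      Submodule.finiteDimensional_of_le (hKle z)
    -- each K z has dimension at most 1 when z ∈ g (-1), z ≠ 0
    have hKdim : ∀ z, z ∈ g (-1) → z ≠ 0 → Module.finrank ℝ (K z) ≤ 1 := by
      intro z hzmem hzne
      obtain ⟨α, β, hzeq⟩ := A.spans z hzmem
      have hαβ : ¬(α = 0 ∧ β = 0) := by
        rintro ⟨h1', h2'⟩
        exact hzne (by rw [hzeq, h1', h2']; module)
      have key : ∀ φ : L →ₗ[ℝ] ℝ,
          (∀ a ∈ K z, φ a = 0 → a = 0) → Module.finrank ℝ (K z) ≤ 1 := by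
        intro φ hφ
        have hinj : Function.Injective (φ.comp (K z).subtype) := by
          rw [← LinearMap.ker_eq_bot, eq_bot_iff]
          rintro ⟨a, haK⟩ ha0
          simp only [LinearMap.mem_ker, LinearMap.comp_apply, Submodule.subtype_apply] at ha0
          have := hφ a haK ha0
          simpa [Submodule.mk_eq_zero] using this
        have := LinearMap.finrank_le_finrank_of_injective hinj
        simpa using this
      -- extract scalar equations for elements of K z
      have heqs : ∀ a ∈ K z, ∀ p q r s : ℝ,
          ⁅a, A.y1⁆ = p • A.y1 + r • A.y2 → ⁅a, A.y2⁆ = q • A.y1 + s • A.y2 →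
          α * p + β * q = 0 ∧ α * r + β * s = 0 ∧ p + s = 0 := by
        intro a haK p q r s h1 h2
        have haz : ⁅a, z⁆ = 0 := by
          have := (Submodule.mem_inf.mp ((Submodule.mem_inf.mp haK).1)).2
          rw [LinearMap.mem_ker] at this
          rw [← hbrR z a]; exact this
        have htr0 : A.tr a = 0 := by
          have := (Submodule.mem_inf.mp haK).2
          rwa [LinearMap.mem_ker] at this
        rw [hzeq, lie_add, lie_smul, lie_smul, h1, h2] at haz
        have : (α * p + β * q) • A.y1 + (α * r + β * s) • A.y2 = 0 := by
          rw [← haz]; module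
        obtain ⟨e1, e2⟩ := A.indep _ _ this
        have e3 : p + s = 0 := by rw [← A.htr a p q r s h1 h2]; exact htr0
        exact ⟨e1, e2, e3⟩
      by_cases hα : α = 0
      · have hβ : β ≠ 0 := fun h' => hαβ ⟨hα, h'⟩
        refine key A.cr ?_
        intro a haK hcr0
        have ha0 : a ∈ g 0 := hKle z haK
        obtain ⟨p, q, r, s, h1, h2⟩ := acts_exists h A ha0
        obtain ⟨e1, e2, e3⟩ := heqs a haK p q r s h1 h2
        rw [A.hcr a p q r s h1 h2] at hcr0
        rw [hα] at e1 e2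
        have hq' : q = 0 := by
          rw [zero_mul, zero_add] at e1
          exact (mul_eq_zero.mp e1).resolve_left hβ
        have hs' : s = 0 := by
          rw [zero_mul, zero_add] at e2
          exact (mul_eq_zero.mp e2).resolve_left hβ
        have hp' : p = 0 := by linarith
        refine faithful' h A ha0 ?_ ?_
        · rw [h1, hp', hcr0]; module
        · rw [h2, hq', hs']; module
      · refine key A.cq ?_
        intro a haK hcq0
        have ha0 : a ∈ g 0 := hKle z haK
        obtain ⟨p, q, r, s, h1, h2⟩ := acts_exists h A ha0
        obtain ⟨e1, e2, e3⟩ := heqs a haK p q r s h1 h2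
        rw [A.hcq a p q r s h1 h2] at hcq0
        rw [hcq0, mul_zero, add_zero] at e1
        have hp' : p = 0 := by
          rcases mul_eq_zero.mp e1 with h' | h'
          · exact absurd h' hα
          · exact h'
        have hs' : s = 0 := by linarith
        rw [hs', mul_zero, add_zero] at e2
        have hr' : r = 0 := by
          rcases mul_eq_zero.mp e2 with h' | h'
          · exact absurd h' hα
          · exact h'
        refine faithful' h A ha0 ?_ ?_
        · rw [h1, hp', hr']; module
        · rw [h2, hcq0, hs']; module
    -- m is contained in K z1 ⊔ K z2
    have hmle : m ≤ K z1 ⊔ K z2 := by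
      rw [hm, Submodule.span_le]
      rintro w ⟨x, hx, y, hy, rfl⟩
      obtain ⟨c1, c2, rfl⟩ := hxspan x hx
      have hK1 : ⁅x1, y⁆ ∈ K z1 := by
        refine Submodule.mem_inf.mpr ⟨Submodule.mem_inf.mpr ⟨br h (by norm_num) hx1 hy, ?_⟩, ?_⟩
        · rw [LinearMap.mem_ker, hbrR, hzp1 y hy, hcon _ (br h (by norm_num) hx1 hy)
            (hgen _ hx1 _ hy), neg_zero, zero_smul]
        · rw [LinearMap.mem_ker]
          exact hcon _ (br h (by norm_num) hx1 hy) (hgen _ hx1 _ hy)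
      have hK2 : ⁅x2, y⁆ ∈ K z2 := by
        refine Submodule.mem_inf.mpr ⟨Submodule.mem_inf.mpr ⟨br h (by norm_num) hx2 hy, ?_⟩, ?_⟩
        · rw [LinearMap.mem_ker, hbrR, hzp2 y hy, hcon _ (br h (by norm_num) hx2 hy)
            (hgen _ hx2 _ hy), neg_zero, zero_smul]
        · rw [LinearMap.mem_ker]
          exact hcon _ (br h (by norm_num) hx2 hy) (hgen _ hx2 _ hy)
      have : ⁅c1 • x1 + c2 • x2, y⁆ = c1 • ⁅x1, y⁆ + c2 • ⁅x2, y⁆ := by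
        rw [add_lie, smul_lie, smul_lie]
      rw [this]
      exact Submodule.add_mem_sup (Submodule.smul_mem _ _ hK1) (Submodule.smul_mem _ _ hK2)
    -- dimension bounds give a contradiction with E, F, H' ∈ m
    haveI : FiniteDimensional ℝ (K z1 ⊔ K z2 : Submodule ℝ L) :=
      Submodule.finiteDimensional_of_le (sup_le (hKle z1) (hKle z2))
    have hd2 : Module.finrank ℝ (K z1 ⊔ K z2 : Submodule ℝ L) ≤ 2 := by
      have := Submodule.finrank_sup_add_finrank_inf_eq (K z1) (K z2)
      have h1 := hKdim z1 hz1 hz1ne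
      have h2 := hKdim z2 hz2 hz2ne
      omega
    have hli : LinearIndependent ℝ ![E, F, H'] := by
      rw [Fintype.linearIndependent_iff]
      intro t ht
      rw [Fin.sum_univ_three] at ht
      simp only [Matrix.cons_val_zero, Matrix.cons_val_one, Matrix.head_cons,
        Matrix.cons_val_two, Matrix.tail_cons] at ht
      have hb1 : ⁅t 0 • E + t 1 • F + t 2 • H', A.y1⁆ = t 2 • A.y1 + t 1 • A.y2 := by
        rw [add_lie, add_lie, smul_lie, smul_lie, smul_lie, hE1, hF1, hH1]; module
      have hb2 : ⁅t 0 • E + t 1 • F + t 2 • H', A.y2⁆ = t 0 • A.y1 + (-(t 2)) • A.y2 := by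
        rw [add_lie, add_lie, smul_lie, smul_lie, smul_lie, hE2, hF2, hH2]; module
      rw [ht, zero_lie] at hb1 hb2
      obtain ⟨e1, e2⟩ := A.indep _ _ hb1.symm
      obtain ⟨e3, _⟩ := A.indep _ _ hb2.symm
      intro i
      fin_cases i
      · exact e3
      · exact e2
      · exact e1
    have h3 : Module.finrank ℝ (Submodule.span ℝ (Set.range ![E, F, H'])) = 3 := by
      rw [finrank_span_eq_card hli]
      simp
    have hle3 : Submodule.span ℝ (Set.range ![E, F, H']) ≤ K z1 ⊔ K z2 := by
      rw [Submodule.span_le]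
      intro w hw
      simp only [Set.mem_range] at hw
      obtain ⟨i, rfl⟩ := hw
      fin_cases i
      · exact hmle hEmm
      · exact hmle hFmm
      · exact hmle hHmm
    have := Submodule.finrank_mono hle3
    omega
  -- step E : g 0 ≤ m
  obtain ⟨c, hcg0, hcm, hctr⟩ := trful
  obtain ⟨pc, qc, rc, sc, hc1, hc2⟩ := acts_exists h A hcg0
  have htrc : A.tr c = pc + sc := A.htr c pc qc rc sc hc1 hc2
  have hτ : pc + sc ≠ 0 := by rw [← htrc]; exact hctr
  -- h0 ∈ m
  have hchm : c - qc • E - rc • F - ((pc - sc) / 2) • H' ∈ m := by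
    exact Submodule.sub_mem _ (Submodule.sub_mem _ (Submodule.sub_mem _ hcm
      (Submodule.smul_mem _ _ hEmm)) (Submodule.smul_mem _ _ hFmm))
      (Submodule.smul_mem _ _ hHmm)
  have hcheq : c - qc • E - rc • F - ((pc - sc) / 2) • H' = ((pc + sc) / 2) • h0 := by
    refine eq_of_acts h A ?_ (Submodule.smul_mem _ _ hh00) ?_ ?_
    · exact Submodule.sub_mem _ (Submodule.sub_mem _ (Submodule.sub_mem _ hcg0
        (Submodule.smul_mem _ _ hE0)) (Submodule.smul_mem _ _ hF0))
        (Submodule.smul_mem _ _ hHg0)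
    · rw [sub_lie, sub_lie, sub_lie, smul_lie, smul_lie, smul_lie, smul_lie,
        hc1, hE1, hF1, hH1, hh01]
      match_scalars <;> ring
    · rw [sub_lie, sub_lie, sub_lie, smul_lie, smul_lie, smul_lie, smul_lie,
        hc2, hE2, hF2, hH2, hh02]
      match_scalars <;> ring
  have hh0m : h0 ∈ m := by
    have : h0 = ((pc + sc) / 2)⁻¹ • (c - qc • E - rc • F - ((pc - sc) / 2) • H') := by
      rw [hcheq, smul_smul, inv_mul_cancel₀ (by simpa using hτ), one_smul]
    rw [this]
    exact Submodule.smul_mem _ _ hchm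
  -- every element of g 0 is a combination of E, F, H', h0
  intro a ha
  obtain ⟨p, q, r, s, h1, h2⟩ := acts_exists h A ha
  have : a = q • E + r • F + ((p - s) / 2) • H' + ((p + s) / 2) • h0 := by
    refine eq_of_acts h A ha ?_ ?_ ?_
    · exact Submodule.add_mem _ (Submodule.add_mem _ (Submodule.add_mem _
        (Submodule.smul_mem _ _ hE0) (Submodule.smul_mem _ _ hF0))
        (Submodule.smul_mem _ _ hHg0)) (Submodule.smul_mem _ _ hh00)
    · rw [add_lie, add_lie, add_lie, smul_lie, smul_lie, smul_lie, smul_lie,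
        h1, hE1, hF1, hH1, hh01]
      match_scalars <;> ring
    · rw [add_lie, add_lie, add_lie, smul_lie, smul_lie, smul_lie, smul_lie,
        h2, hE2, hF2, hH2, hh02]
      match_scalars <;> ring
  rw [this]
  exact Submodule.add_mem _ (Submodule.add_mem _ (Submodule.add_mem _
    (Submodule.smul_mem _ _ hEmm) (Submodule.smul_mem _ _ hFmm))
    (Submodule.smul_mem _ _ hHmm)) (Submodule.smul_mem _ _ hh0m)


theorem Plem (h : G2GradedData L g) {x : L} (hx : x ∈ g 1) (hxne : x ≠ 0)
    (hinv : ∀ a ∈ g 0, ∃ μ : ℝ, ⁅a, x⁆ = μ • x) : False := by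
  obtain ⟨A⟩ := exists_aux h
  obtain ⟨E, hE0, hE1, hE2⟩ := A.realize 0 1 0 0
  obtain ⟨F, hF0, hF1, hF2⟩ := A.realize 0 0 1 0
  set H' := ⁅E, F⁆ with hH'
  have hHg0 : H' ∈ g 0 := br h (by norm_num) hE0 hF0
  obtain ⟨hH1', hH2'⟩ := lie_acts h A hE1 hE2 hF1 hF2
  have hH1 : ⁅H', A.y1⁆ = (1 : ℝ) • A.y1 + (0 : ℝ) • A.y2 := by rw [hH1']; norm_num
  have hH2 : ⁅H', A.y2⁆ = (0 : ℝ) • A.y1 + (-1 : ℝ) • A.y2 := by rw [hH2']; norm_num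
  obtain ⟨μE, hμE⟩ := hinv E hE0
  obtain ⟨μF, hμF⟩ := hinv F hF0
  have hHx : ⁅H', x⁆ = 0 := by
    rw [hH', lie_lie, hμF, hμE, lie_smul, lie_smul, hμE, hμF]
    module
  have hc10 : ⁅x, A.y1⁆ ∈ g 0 := br h (by norm_num) hx A.hy1
  have hc20 : ⁅x, A.y2⁆ ∈ g 0 := br h (by norm_num) hx A.hy2
  obtain ⟨p, q, r, s, h1, h2⟩ := acts_exists h A hc10
  -- ⁅H', ⁅x,y1⁆⁆ = ⁅x, y1⁆
  have relH : ⁅H', ⁅x, A.y1⁆⁆ = ⁅x, A.y1⁆ := by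
    rw [leibniz_lie, hHx, zero_lie, zero_add, hH1]
    rw [lie_add, lie_smul, lie_smul]
    module
  obtain ⟨f1, f2⟩ := lie_acts h A hH1 hH2 h1 h2
  rw [relH] at f1 f2
  obtain ⟨e1, e2⟩ := indep_eq A (h1.symm.trans f1)
  obtain ⟨e3, e4⟩ := indep_eq A (h2.symm.trans f2)
  norm_num at e1 e2 e3 e4
  have hp : p = 0 := by linarith
  have hr : r = 0 := by linarith
  have hq : q = 0 := by linarith
  have hs : s = 0 := by linarith
  have hc1z : ⁅x, A.y1⁆ = 0 := by
    refine faithful' h A hc10 ?_ ?_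
    · rw [h1, hp, hr]; module
    · rw [h2, hq, hs]; module
  have hc2z : ⁅x, A.y2⁆ = 0 := by
    have relF : ⁅F, ⁅x, A.y1⁆⁆ = μF • ⁅x, A.y1⁆ + ⁅x, A.y2⁆ := by
      rw [leibniz_lie, hμF, smul_lie, hF1, lie_add, lie_smul, lie_smul]
      module
    rw [hc1z, lie_zero, smul_zero, zero_add] at relF
    exact relF.symm
  obtain ⟨yy, hyy, hyne⟩ := h.dual 1 (by norm_num) x hx hxne
  rw [show -(1 : ℤ) = -1 by norm_num] at hyy
  apply hyne
  obtain ⟨c, d, rfl⟩ := A.spans yy hyy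
  rw [lie_add, lie_smul, lie_smul, hc1z, hc2z, smul_zero, smul_zero, add_zero]

theorem P'lem (h : G2GradedData L g) {y : L} (hy : y ∈ g (-1)) (hyne : y ≠ 0)
    (hinv : ∀ a ∈ g 0, ∃ μ : ℝ, ⁅a, y⁆ = μ • y) : False := by
  obtain ⟨A⟩ := exists_aux h
  obtain ⟨E, hE0, hE1, hE2⟩ := A.realize 0 1 0 0
  obtain ⟨F, hF0, hF1, hF2⟩ := A.realize 0 0 1 0
  obtain ⟨c, d, rfl⟩ := A.spans y hy
  obtain ⟨μ, hμ⟩ := hinv E hE0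
  obtain ⟨ν, hν⟩ := hinv F hF0
  rw [lie_add, lie_smul, lie_smul, hE1, hE2] at hμ
  rw [lie_add, lie_smul, lie_smul, hF1, hF2] at hν
  have hμ' : (d - μ * c) • A.y1 + (0 - μ * d) • A.y2 = 0 := by
    have expand : (d - μ * c) • A.y1 + (0 - μ * d) • A.y2
        = (c • ((0:ℝ) • A.y1 + (0:ℝ) • A.y2) + d • ((1:ℝ) • A.y1 + (0:ℝ) • A.y2))
          - μ • (c • A.y1 + d • A.y2) := by module
    rw [expand, ← hμ, sub_self]
  have hν' : (0 - ν * c) • A.y1 + (c - ν * d) • A.y2 = 0 := by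
    have expand : (0 - ν * c) • A.y1 + (c - ν * d) • A.y2
        = (c • ((0:ℝ) • A.y1 + (1:ℝ) • A.y2) + d • ((0:ℝ) • A.y1 + (0:ℝ) • A.y2))
          - ν • (c • A.y1 + d • A.y2) := by module
    rw [expand, ← hν, sub_self]
  obtain ⟨e1, e2⟩ := A.indep _ _ hμ'
  obtain ⟨e3, e4⟩ := A.indep _ _ hν'
  by_cases hc : c = 0
  · have hd : d ≠ 0 := by
      intro hd
      exact hyne (by rw [hc, hd]; module)
    have : d = 0 := by rw [hc] at e1; linarith [e1]
    exact hd this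
  · have hν0 : ν = 0 := by
      have := e3
      have : ν * c = 0 := by linarith
      rcases mul_eq_zero.mp this with h' | h'
      · exact h'
      · exact absurd h' hc
    have : c = 0 := by rw [hν0] at e4; linarith
    exact hc this

theorem g1_kills (h : G2GradedData L g) {u w : L} (hu : u ∈ g 2) (hune : u ≠ 0)
    (hw : w ∈ g (-3)) (huw : ⁅u, w⁆ = 0) : ∀ x ∈ g 1, ⁅x, w⁆ = 0 := by
  intro x hx
  obtain ⟨y, hy, hxy⟩ := h.surj2 1 (Or.inl rfl) u
    (by rwa [show (2 : ℤ) * 1 = 2 by norm_num]) hune x hx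
  rw [show (-1 : ℤ) = -1 by norm_num] at hy
  rw [← hxy, lie_lie, brbot h hy hw (by norm_num), lie_zero, huw, lie_zero, sub_zero]

theorem g0_kills_neg (h : G2GradedData L g) {w : L} (hw : w ∈ g (-3))
    (hg1 : ∀ x ∈ g 1, ⁅x, w⁆ = 0) : ∀ a ∈ g 0, ⁅a, w⁆ = 0 := by
  intro a ha
  have hmem := Qlem h ha
  clear ha
  induction hmem using Submodule.span_induction with
  | mem z hz =>
    obtain ⟨x, hx, y, hy, rfl⟩ := hz
    rw [lie_lie, brbot h hy hw (by norm_num), lie_zero, hg1 x hx, lie_zero, sub_zero]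
  | zero => rw [zero_lie]
  | add u' v' hu' hv' hu'' hv'' => rw [add_lie, hu'', hv'', add_zero]
  | smul t u' hu' hu'' => rw [smul_lie, hu'', smul_zero]

/-- Bracketing with a nonzero element of `g 2` is injective `g (-3) → g (-1)`. -/
theorem Rs (h : G2GradedData L g) {u w : L} (hu : u ∈ g 2) (hune : u ≠ 0)
    (hw : w ∈ g (-3)) (huw : ⁅u, w⁆ = 0) : w = 0 := by
  obtain ⟨A⟩ := exists_aux h
  have hg0w := g0_kills_neg h hw (g1_kills h hu hune hw huw)
  obtain ⟨c, d, hweq⟩ := g3'_span h A hw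
  obtain ⟨E, hE0, hE1, hE2⟩ := A.realize 0 1 0 0
  obtain ⟨F, hF0, hF1, hF2⟩ := A.realize 0 0 1 0
  have hy0mem : c • A.y1 + d • A.y2 ∈ g (-1) :=
    add_mem (Submodule.smul_mem _ _ A.hy1) (Submodule.smul_mem _ _ A.hy2)
  have hβ : w = ⁅c • A.y1 + d • A.y2, ⁅A.y1, A.y2⁆⁆ := by
    rw [add_lie, smul_lie, smul_lie]; exact hweq
  have htrE : A.tr E = 0 := by
    rw [A.htr E 0 1 0 0 hE1 hE2]; norm_num
  have htrF : A.tr F = 0 := by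
    rw [A.htr F 0 0 1 0 hF1 hF2]; norm_num
  have hkill : ∀ a ∈ g 0, A.tr a = 0 → ⁅a, c • A.y1 + d • A.y2⁆ = 0 := by
    intro a ha htra
    have h1 := hg0w a ha
    rw [hβ, equiv_m3 h A ha, htra, zero_smul, add_zero] at h1
    exact beta_inj h A (br h (show (0 : ℤ) + -1 = -1 by norm_num) ha hy0mem) h1
  have hE' := hkill E hE0 htrE
  have hF' := hkill F hF0 htrF
  rw [lie_add, lie_smul, lie_smul, hE1, hE2] at hE'
  rw [lie_add, lie_smul, lie_smul, hF1, hF2] at hF'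
  have hEd : d • A.y1 + (0 : ℝ) • A.y2 = 0 := by rw [← hE']; module
  have hFc : (0 : ℝ) • A.y1 + c • A.y2 = 0 := by rw [← hF']; module
  have hd0 := (A.indep _ _ hEd).1
  have hc0 := (A.indep _ _ hFc).2
  rw [hβ, hc0, hd0, zero_smul, zero_smul, zero_add, zero_lie]

theorem gm1_kills (h : G2GradedData L g) {v w : L} (hv : v ∈ g (-2)) (hvne : v ≠ 0)
    (hw : w ∈ g 3) (hvw : ⁅v, w⁆ = 0) : ∀ y ∈ g (-1), ⁅y, w⁆ = 0 := by
  intro y hy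
  obtain ⟨x, hx, hvx⟩ := h.surj2 (-1) (Or.inr rfl) v
    (by rwa [show (2 : ℤ) * (-1) = -2 by norm_num]) hvne y hy
  rw [show (-(-1) : ℤ) = 1 by norm_num] at hx
  rw [← hvx, lie_lie, brbot h hx hw (by norm_num), lie_zero, hvw, lie_zero, sub_zero]

theorem g0_kills_pos (h : G2GradedData L g) {w : L} (hw : w ∈ g 3)
    (hgm1 : ∀ y ∈ g (-1), ⁅y, w⁆ = 0) : ∀ a ∈ g 0, ⁅a, w⁆ = 0 := by
  intro a ha
  have hmem := Qlem h ha
  clear ha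
  induction hmem using Submodule.span_induction with
  | mem z hz =>
    obtain ⟨x, hx, y, hy, rfl⟩ := hz
    rw [lie_lie, hgm1 y hy, lie_zero, brbot h hx hw (by norm_num), lie_zero, sub_zero]
  | zero => rw [zero_lie]
  | add u' v' hu' hv' hu'' hv'' => rw [add_lie, hu'', hv'', add_zero]
  | smul t u' hu' hu'' => rw [smul_lie, hu'', smul_zero]

/-- Bracketing with a nonzero element of `g (-2)` is injective `g 3 → g 1`. -/
theorem Rs' (h : G2GradedData L g) {v w : L} (hv : v ∈ g (-2)) (hvne : v ≠ 0)
    (hw : w ∈ g 3) (hvw : ⁅v, w⁆ = 0) : w = 0 := by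
  obtain ⟨A⟩ := exists_aux h
  have hg0w := g0_kills_pos h hw (gm1_kills h hv hvne hw hvw)
  obtain ⟨h0, hh00, hh01, hh02⟩ := A.realize 1 0 0 1
  have hid : ∀ z ∈ g (-1), ⁅h0, z⁆ = z := by
    intro z hz
    obtain ⟨c, d, rfl⟩ := A.spans z hz
    rw [lie_add, lie_smul, lie_smul, hh01, hh02]
    module
  have hcentral : ∀ a ∈ g 0, ⁅h0, a⁆ = 0 := by
    intro a ha
    refine faithful' h A (br h (show (0 : ℤ) + 0 = 0 by norm_num) hh00 ha) ?_ ?_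
    · rw [lie_lie, hid A.y1 A.hy1,
        hid _ (br h (show (0 : ℤ) + -1 = -1 by norm_num) ha A.hy1), sub_self]
    · rw [lie_lie, hid A.y2 A.hy2,
        hid _ (br h (show (0 : ℤ) + -1 = -1 by norm_num) ha A.hy2), sub_self]
  have hominj : ∀ x ∈ g 1, (∀ y ∈ g (-1), ⁅x, y⁆ = 0) → x = 0 := by
    intro x hx hxy
    by_contra hne
    obtain ⟨y, hy, hne'⟩ := h.dual 1 (by norm_num) x hx hne
    rw [show (-1 : ℤ) = -1 by norm_num] at hy
    exact hne' (hxy y hy)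
  have hdeg1 : ∀ x ∈ g 1, ⁅h0, x⁆ = -x := by
    intro x hx
    have hsum : ⁅h0, x⁆ + x = 0 := by
      refine hominj _ (add_mem (br h (show (0 : ℤ) + 1 = 1 by norm_num) hh00 hx) hx) ?_
      intro y hy
      rw [add_lie, lie_lie, hcentral _ (br h (show (1 : ℤ) + -1 = 0 by norm_num) hx hy),
        hid y hy]
      module
    have : ⁅h0, x⁆ = -x := by
      have := hsum
      rw [← sub_eq_zero]
      rw [sub_neg_eq_add]
      exact this
    exact this
  have hdeg2 : ∀ u' ∈ g 2, ⁅h0, u'⁆ = (-2 : ℝ) • u' := by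
    intro u' hu'
    have hle := h.lambda2 1 (Or.inl rfl)
    rw [show (2 : ℤ) * 1 = 2 by norm_num] at hle
    have hmem := hle hu'
    clear hu'
    induction hmem using Submodule.span_induction with
    | mem z hz =>
      obtain ⟨x, hx, x', hx', rfl⟩ := hz
      rw [leibniz_lie, hdeg1 x hx, hdeg1 x' hx', neg_lie, lie_neg]
      module
    | zero => rw [lie_zero, smul_zero]
    | add u'' v'' hu'' hv'' hu3 hv3 => rw [lie_add, hu3, hv3, smul_add]
    | smul t u'' hu'' hu3 => rw [lie_smul, hu3, smul_comm]
  have hdeg3 : ⁅h0, w⁆ = (-3 : ℝ) • w := by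
    have hle := h.pair12 1 (Or.inl rfl)
    rw [show (3 : ℤ) * 1 = 3 by norm_num, show (2 : ℤ) * 1 = 2 by norm_num] at hle
    have hmem := hle hw
    clear hvw hg0w hw
    induction hmem using Submodule.span_induction with
    | mem z hz =>
      obtain ⟨x, hx, u', hu', rfl⟩ := hz
      rw [leibniz_lie, hdeg1 x hx, hdeg2 u' hu', neg_lie, lie_smul]
      module
    | zero => rw [lie_zero, smul_zero]
    | add u'' v'' hu'' hv'' hu3 hv3 => rw [lie_add, hu3, hv3, smul_add]
    | smul t u'' hu'' hu3 => rw [lie_smul, hu3, smul_comm]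
  have h1 := hg0w h0 hh00
  rw [hdeg3] at h1
  rcases smul_eq_zero.mp h1 with h' | h'
  · norm_num at h'
  · exact h'

theorem line_lemma (p : Submodule ℝ L) (fd : FiniteDimensional ℝ p)
    (hp : Module.finrank ℝ p = 1) {x : L} (hx : x ∈ p) (hxne : x ≠ 0) :
    ∀ z ∈ p, ∃ μ : ℝ, z = μ • x := by
  haveI := fd
  have h1 : Submodule.span ℝ {x} ≤ p := by
    rw [Submodule.span_le, Set.singleton_subset_iff]; exact hx
  have heq : Submodule.span ℝ {x} = p :=
    Submodule.eq_of_le_of_finrank_le h1 (by rw [hp, finrank_span_singleton hxne])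
  intro z hz
  rw [← heq] at hz
  obtain ⟨μ, hμ⟩ := Submodule.mem_span_singleton.mp hz
  exact ⟨μ, hμ.symm⟩

end G2P

/-- In the `|3|`-graded split real Lie algebra of type `G₂`, any proper graded Lie
subalgebra `b = ⊕_{i=-3}^3 b_i` has dimension at most `9`. -/
theorem stmt8 (L : Type*) [LieRing L] [LieAlgebra ℝ L]
    (g : ℤ → Submodule ℝ L) (hG2 : G2GradedData L g)
    (b : LieSubalgebra ℝ L)
    (hgraded : b.toSubmodule = ⨆ d : ℤ, (b.toSubmodule ⊓ g d))
    (hproper : b ≠ ⊤) :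
    Module.finrank ℝ b.toSubmodule ≤ 9 := by
  classical
  by_contra hgt
  push_neg at hgt
  -- finite-dimensionality of the pieces
  haveI fdm3 : FiniteDimensional ℝ (g (-3)) := .of_finrank_pos (by rw [hG2.dim3']; norm_num)
  haveI fdm2 : FiniteDimensional ℝ (g (-2)) := .of_finrank_pos (by rw [hG2.dim2']; norm_num)
  haveI fdm1 : FiniteDimensional ℝ (g (-1)) := .of_finrank_pos (by rw [hG2.dim1']; norm_num)
  haveI fd0 : FiniteDimensional ℝ (g 0) := .of_finrank_pos (by rw [hG2.dim0]; norm_num)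
  haveI fd1 : FiniteDimensional ℝ (g 1) := .of_finrank_pos (by rw [hG2.dim1]; norm_num)
  haveI fd2 : FiniteDimensional ℝ (g 2) := .of_finrank_pos (by rw [hG2.dim2]; norm_num)
  haveI fd3 : FiniteDimensional ℝ (g 3) := .of_finrank_pos (by rw [hG2.dim3]; norm_num)
  haveI bm3 : FiniteDimensional ℝ (b.toSubmodule ⊓ g (-3) : Submodule ℝ L) :=
    Submodule.finiteDimensional_of_le inf_le_right
  haveI bm2 : FiniteDimensional ℝ (b.toSubmodule ⊓ g (-2) : Submodule ℝ L) :=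
    Submodule.finiteDimensional_of_le inf_le_right
  haveI bm1 : FiniteDimensional ℝ (b.toSubmodule ⊓ g (-1) : Submodule ℝ L) :=
    Submodule.finiteDimensional_of_le inf_le_right
  haveI b0 : FiniteDimensional ℝ (b.toSubmodule ⊓ g 0 : Submodule ℝ L) :=
    Submodule.finiteDimensional_of_le inf_le_right
  haveI b1 : FiniteDimensional ℝ (b.toSubmodule ⊓ g 1 : Submodule ℝ L) :=
    Submodule.finiteDimensional_of_le inf_le_right
  haveI b2 : FiniteDimensional ℝ (b.toSubmodule ⊓ g 2 : Submodule ℝ L) :=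
    Submodule.finiteDimensional_of_le inf_le_right
  haveI b3 : FiniteDimensional ℝ (b.toSubmodule ⊓ g 3 : Submodule ℝ L) :=
    Submodule.finiteDimensional_of_le inf_le_right
  -- b is below the sup of its seven graded pieces
  set P : ℤ → Submodule ℝ L := fun d => b.toSubmodule ⊓ g d with hP
  have hble : b.toSubmodule ≤
      P (-3) ⊔ P (-2) ⊔ P (-1) ⊔ P 0 ⊔ P 1 ⊔ P 2 ⊔ P 3 := by
    conv_lhs => rw [hgraded]
    refine iSup_le fun d => ?_
    have hd : d = -3 ∨ d = -2 ∨ d = -1 ∨ d = 0 ∨ d = 1 ∨ d = 2 ∨ d = 3 ∨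
        (d ≤ -4 ∨ 4 ≤ d) := by omega
    rcases hd with rfl | rfl | rfl | rfl | rfl | rfl | rfl | h'
    · intro x hx
      exact Submodule.mem_sup_left (Submodule.mem_sup_left (Submodule.mem_sup_left
        (Submodule.mem_sup_left (Submodule.mem_sup_left (Submodule.mem_sup_left hx)))))
    · intro x hx
      exact Submodule.mem_sup_left (Submodule.mem_sup_left (Submodule.mem_sup_left
        (Submodule.mem_sup_left (Submodule.mem_sup_left (Submodule.mem_sup_right hx)))))
    · intro x hx
      exact Submodule.mem_sup_left (Submodule.mem_sup_left (Submodule.mem_sup_left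
        (Submodule.mem_sup_left (Submodule.mem_sup_right hx))))
    · intro x hx
      exact Submodule.mem_sup_left (Submodule.mem_sup_left (Submodule.mem_sup_left
        (Submodule.mem_sup_right hx)))
    · intro x hx
      exact Submodule.mem_sup_left (Submodule.mem_sup_left (Submodule.mem_sup_right hx))
    · intro x hx
      exact Submodule.mem_sup_left (Submodule.mem_sup_right hx)
    · intro x hx
      exact Submodule.mem_sup_right hx
    · have hbot : g d = ⊥ := by
        refine hG2.supp d ?_
        rcases h' with h' | h'
        · rw [abs_of_neg (by omega)]; omega
        · rw [abs_of_nonneg (by omega)]; omega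
      refine le_trans inf_le_right ?_
      rw [hbot]
      exact bot_le
  -- numerical facts
  have cap3' : Module.finrank ℝ (P (-3)) ≤ 2 := by
    rw [← hG2.dim3']; exact Submodule.finrank_mono inf_le_right
  have cap2' : Module.finrank ℝ (P (-2)) ≤ 1 := by
    rw [← hG2.dim2']; exact Submodule.finrank_mono inf_le_right
  have cap1' : Module.finrank ℝ (P (-1)) ≤ 2 := by
    rw [← hG2.dim1']; exact Submodule.finrank_mono inf_le_right
  have cap0 : Module.finrank ℝ (P 0) ≤ 4 := by
    rw [← hG2.dim0]; exact Submodule.finrank_mono inf_le_right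
  have cap1 : Module.finrank ℝ (P 1) ≤ 2 := by
    rw [← hG2.dim1]; exact Submodule.finrank_mono inf_le_right
  have cap2 : Module.finrank ℝ (P 2) ≤ 1 := by
    rw [← hG2.dim2]; exact Submodule.finrank_mono inf_le_right
  have cap3 : Module.finrank ℝ (P 3) ≤ 2 := by
    rw [← hG2.dim3]; exact Submodule.finrank_mono inf_le_right
  have hsum : 10 ≤ Module.finrank ℝ (P (-3)) + Module.finrank ℝ (P (-2))
      + Module.finrank ℝ (P (-1)) + Module.finrank ℝ (P 0) + Module.finrank ℝ (P 1)
      + Module.finrank ℝ (P 2) + Module.finrank ℝ (P 3) := by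
    have h10 : 10 ≤ Module.finrank ℝ b.toSubmodule := hgt
    have hm := Submodule.finrank_mono hble
    have s1 := Submodule.finrank_sup_add_finrank_inf_eq (P (-3)) (P (-2))
    have s2 := Submodule.finrank_sup_add_finrank_inf_eq (P (-3) ⊔ P (-2)) (P (-1))
    have s3 := Submodule.finrank_sup_add_finrank_inf_eq (P (-3) ⊔ P (-2) ⊔ P (-1)) (P 0)
    have s4 := Submodule.finrank_sup_add_finrank_inf_eq
      (P (-3) ⊔ P (-2) ⊔ P (-1) ⊔ P 0) (P 1)
    have s5 := Submodule.finrank_sup_add_finrank_inf_eq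
      (P (-3) ⊔ P (-2) ⊔ P (-1) ⊔ P 0 ⊔ P 1) (P 2)
    have s6 := Submodule.finrank_sup_add_finrank_inf_eq
      (P (-3) ⊔ P (-2) ⊔ P (-1) ⊔ P 0 ⊔ P 1 ⊔ P 2) (P 3)
    omega
  -- fullness transfer
  have full_of : ∀ d : ℤ, FiniteDimensional ℝ (g d) →
      Module.finrank ℝ (g d) ≤ Module.finrank ℝ (P d) → g d ≤ b.toSubmodule := by
    intro d fd hd
    haveI := fd
    have heq : P d = g d :=
      Submodule.eq_of_le_of_finrank_le (inf_le_right : P d ≤ g d) hd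
    calc g d = P d := heq.symm
      _ ≤ b.toSubmodule := inf_le_left
  have rank_of_full : ∀ d : ℤ, g d ≤ b.toSubmodule →
      Module.finrank ℝ (P d) = Module.finrank ℝ (g d) := by
    intro d hd
    have : P d = g d := le_antisymm inf_le_right (le_inf hd le_rfl)
    rw [this]
  have nonbot_of : ∀ d : ℤ, 1 ≤ Module.finrank ℝ (P d) →
      ∃ u, u ∈ b.toSubmodule ∧ u ∈ g d ∧ u ≠ 0 := by
    intro d hd
    obtain ⟨u, hu, hune⟩ := G2P.nonbot (P d) (by omega)
    exact ⟨u, (Submodule.mem_inf.mp hu).1, (Submodule.mem_inf.mp hu).2, hune⟩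
  -- span transfers
  have hg2neg : g (-1) ≤ b.toSubmodule → g (-2) ≤ b.toSubmodule := by
    intro hfull
    have hle := hG2.lambda2 (-1) (Or.inr rfl)
    rw [show (2 : ℤ) * (-1) = -2 by norm_num] at hle
    refine le_trans hle ?_
    rw [Submodule.span_le]
    rintro z ⟨x, hx, y, hy, rfl⟩
    exact b.lie_mem (hfull hx) (hfull hy)
  have hg3neg : g (-1) ≤ b.toSubmodule → g (-2) ≤ b.toSubmodule →
      g (-3) ≤ b.toSubmodule := by
    intro hfull1 hfull2
    have hle := hG2.pair12 (-1) (Or.inr rfl)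
    rw [show (3 : ℤ) * (-1) = -3 by norm_num,
      show (2 : ℤ) * (-1) = -2 by norm_num] at hle
    refine le_trans hle ?_
    rw [Submodule.span_le]
    rintro z ⟨x, hx, y, hy, rfl⟩
    exact b.lie_mem (hfull1 hx) (hfull2 hy)
  have hg2pos : g 1 ≤ b.toSubmodule → g 2 ≤ b.toSubmodule := by
    intro hfull
    have hle := hG2.lambda2 1 (Or.inl rfl)
    rw [show (2 : ℤ) * 1 = 2 by norm_num] at hle
    refine le_trans hle ?_
    rw [Submodule.span_le]
    rintro z ⟨x, hx, y, hy, rfl⟩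
    exact b.lie_mem (hfull hx) (hfull hy)
  have hg3pos : g 1 ≤ b.toSubmodule → g 2 ≤ b.toSubmodule → g 3 ≤ b.toSubmodule := by
    intro hfull1 hfull2
    have hle := hG2.pair12 1 (Or.inl rfl)
    rw [show (3 : ℤ) * 1 = 3 by norm_num, show (2 : ℤ) * 1 = 2 by norm_num] at hle
    refine le_trans hle ?_
    rw [Submodule.span_le]
    rintro z ⟨x, hx, y, hy, rfl⟩
    exact b.lie_mem (hfull1 hx) (hfull2 hy)
  -- surjectivity transfers
  have hsurj21 : g (-1) ≤ b.toSubmodule → ∀ u, u ∈ b.toSubmodule → u ∈ g 2 → u ≠ 0 →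
      g 1 ≤ b.toSubmodule := by
    intro hfull u hub hu2 hune z hz
    obtain ⟨xx, hxx, heq⟩ := hG2.surj2 1 (Or.inl rfl) u
      (by rwa [show (2 : ℤ) * 1 = 2 by norm_num]) hune z hz
    rw [← heq]
    exact b.lie_mem hub (hfull (by simpa using hxx))
  have hsurj32 : g (-1) ≤ b.toSubmodule → ∀ u, u ∈ b.toSubmodule → u ∈ g 3 → u ≠ 0 →
      g 2 ≤ b.toSubmodule := by
    intro hfull u hub hu3 hune z hz
    obtain ⟨xx, hxx, heq⟩ := hG2.surj3 1 (Or.inl rfl) u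
      (by rwa [show (3 : ℤ) * 1 = 3 by norm_num]) hune z
      (by rwa [show (2 : ℤ) * 1 = 2 by norm_num])
    rw [← heq]
    exact b.lie_mem hub (hfull (by simpa using hxx))
  have hsurj21' : g 1 ≤ b.toSubmodule → ∀ u, u ∈ b.toSubmodule → u ∈ g (-2) → u ≠ 0 →
      g (-1) ≤ b.toSubmodule := by
    intro hfull u hub hu2 hune z hz
    obtain ⟨xx, hxx, heq⟩ := hG2.surj2 (-1) (Or.inr rfl) u
      (by rwa [show (2 : ℤ) * (-1) = -2 by norm_num]) hune z hz
    rw [← heq]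
    exact b.lie_mem hub (hfull (by simpa using hxx))
  have hsurj32' : g 1 ≤ b.toSubmodule → ∀ u, u ∈ b.toSubmodule → u ∈ g (-3) → u ≠ 0 →
      g (-2) ≤ b.toSubmodule := by
    intro hfull u hub hu3 hune z hz
    obtain ⟨xx, hxx, heq⟩ := hG2.surj3 (-1) (Or.inr rfl) u
      (by rwa [show (3 : ℤ) * (-1) = -3 by norm_num]) hune z
      (by rwa [show (2 : ℤ) * (-1) = -2 by norm_num])
    rw [← heq]
    exact b.lie_mem hub (hfull (by simpa using hxx))
  -- both middle levels full forces b = ⊤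
  have hQtop : g 1 ≤ b.toSubmodule → g (-1) ≤ b.toSubmodule → False := by
    intro hf1 hfm1
    apply hproper
    have hf2 := hg2pos hf1
    have hf3 := hg3pos hf1 hf2
    have hfm2 := hg2neg hfm1
    have hfm3 := hg3neg hfm1 hfm2
    have hf0 : g 0 ≤ b.toSubmodule := by
      refine le_trans (G2P.Qlem hG2) ?_
      rw [Submodule.span_le]
      rintro z ⟨x, hx, y, hy, rfl⟩
      exact b.lie_mem (hf1 hx) (hfm1 hy)
    have htop : b.toSubmodule = ⊤ := by
      refine le_antisymm le_top ?_
      rw [← hG2.internal.submodule_iSup_eq_top]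
      refine iSup_le fun d => ?_
      have hd : d = -3 ∨ d = -2 ∨ d = -1 ∨ d = 0 ∨ d = 1 ∨ d = 2 ∨ d = 3 ∨
          (d ≤ -4 ∨ 4 ≤ d) := by omega
      rcases hd with rfl | rfl | rfl | rfl | rfl | rfl | rfl | h'
      · exact hfm3
      · exact hfm2
      · exact hfm1
      · exact hf0
      · exact hf1
      · exact hf2
      · exact hf3
      · have hbot : g d = ⊥ := by
          refine hG2.supp d ?_
          rcases h' with h' | h'
          · rw [abs_of_neg (by omega)]; omega
          · rw [abs_of_nonneg (by omega)]; omega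
        rw [hbot]
        exact bot_le
    rw [← LieSubalgebra.toSubmodule_inj]
    rw [LieSubalgebra.top_toSubmodule]
    exact htop
  -- invariant-line eliminations
  have hline1 : g 0 ≤ b.toSubmodule → Module.finrank ℝ (P 1) = 1 → False := by
    intro hf0 hr1
    obtain ⟨x, hxb, hx1, hxne⟩ := nonbot_of 1 (by omega)
    refine G2P.Plem hG2 hx1 hxne ?_
    intro a ha
    have hmem : ⁅a, x⁆ ∈ P 1 := Submodule.mem_inf.mpr
      ⟨b.lie_mem (hf0 ha) hxb, G2P.br hG2 (by norm_num) ha hx1⟩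
    obtain ⟨μ, hμ⟩ := G2P.line_lemma (P 1) b1 hr1
      (Submodule.mem_inf.mpr ⟨hxb, hx1⟩) hxne _ hmem
    exact ⟨μ, hμ⟩
  have hline1' : g 0 ≤ b.toSubmodule → Module.finrank ℝ (P (-1)) = 1 → False := by
    intro hf0 hr1
    obtain ⟨y, hyb, hy1, hyne⟩ := nonbot_of (-1) (by omega)
    refine G2P.P'lem hG2 hy1 hyne ?_
    intro a ha
    have hmem : ⁅a, y⁆ ∈ P (-1) := Submodule.mem_inf.mpr
      ⟨b.lie_mem (hf0 ha) hyb, G2P.br hG2 (by norm_num) ha hy1⟩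
    obtain ⟨μ, hμ⟩ := G2P.line_lemma (P (-1)) bm1 hr1
      (Submodule.mem_inf.mpr ⟨hyb, hy1⟩) hyne _ hmem
    exact ⟨μ, hμ⟩
  -- main case analysis
  by_cases hm1 : Module.finrank ℝ (P (-1)) = 2
  · have hfullm1 : g (-1) ≤ b.toSubmodule :=
      full_of (-1) fdm1 (by rw [hG2.dim1', hm1])
    have hfullm2 := hg2neg hfullm1
    have hfullm3 := hg3neg hfullm1 hfullm2
    have hrm2 : Module.finrank ℝ (P (-2)) = 1 := by
      rw [rank_of_full _ hfullm2, hG2.dim2']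
    have hrm3 : Module.finrank ℝ (P (-3)) = 2 := by
      rw [rank_of_full _ hfullm3, hG2.dim3']
    by_cases hp1 : Module.finrank ℝ (P 1) = 2
    · exact hQtop (full_of 1 fd1 (by rw [hG2.dim1, hp1])) hfullm1
    · have hn2 : Module.finrank ℝ (P 2) = 0 := by
        by_contra h0
        obtain ⟨u, hub, hu2, hune⟩ := nonbot_of 2 (by omega)
        have hf1 := hsurj21 hfullm1 u hub hu2 hune
        exact hp1 (by rw [rank_of_full _ hf1, hG2.dim1])
      have hn3 : Module.finrank ℝ (P 3) = 0 := by
        by_contra h0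
        obtain ⟨u, hub, hu3, hune⟩ := nonbot_of 3 (by omega)
        have hf2 := hsurj32 hfullm1 u hub hu3 hune
        have := rank_of_full _ hf2
        rw [hG2.dim2] at this
        omega
      have hp1' : Module.finrank ℝ (P 1) ≤ 1 :=
        Nat.lt_succ_iff.mp (lt_of_le_of_ne cap1 hp1)
      have hkey : Module.finrank ℝ (P 0) = 4 ∧ Module.finrank ℝ (P 1) = 1 := by
        constructor <;> omega
      exact hline1 (full_of 0 fd0 (by rw [hG2.dim0, hkey.1])) hkey.2
  · by_cases hp1 : Module.finrank ℝ (P 1) = 2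
    · have hfull1 : g 1 ≤ b.toSubmodule := full_of 1 fd1 (by rw [hG2.dim1, hp1])
      have hfull2 := hg2pos hfull1
      have hfull3 := hg3pos hfull1 hfull2
      have hr2 : Module.finrank ℝ (P 2) = 1 := by
        rw [rank_of_full _ hfull2, hG2.dim2]
      have hr3 : Module.finrank ℝ (P 3) = 2 := by
        rw [rank_of_full _ hfull3, hG2.dim3]
      have hn2 : Module.finrank ℝ (P (-2)) = 0 := by
        by_contra h0
        obtain ⟨u, hub, hu2, hune⟩ := nonbot_of (-2) (by omega)
        have hf1 := hsurj21' hfull1 u hub hu2 hune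
        exact hm1 (by rw [rank_of_full _ hf1, hG2.dim1'])
      have hn3 : Module.finrank ℝ (P (-3)) = 0 := by
        by_contra h0
        obtain ⟨u, hub, hu3, hune⟩ := nonbot_of (-3) (by omega)
        have hf2 := hsurj32' hfull1 u hub hu3 hune
        have := rank_of_full _ hf2
        rw [hG2.dim2'] at this
        omega
      have hm1' : Module.finrank ℝ (P (-1)) ≤ 1 :=
        Nat.lt_succ_iff.mp (lt_of_le_of_ne cap1' hm1)
      have hkey : Module.finrank ℝ (P 0) = 4 ∧ Module.finrank ℝ (P (-1)) = 1 := by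
        constructor <;> omega
      exact hline1' (full_of 0 fd0 (by rw [hG2.dim0, hkey.1])) hkey.2
    · have hm1' : Module.finrank ℝ (P (-1)) ≤ 1 :=
        Nat.lt_succ_iff.mp (lt_of_le_of_ne cap1' hm1)
      have hp1' : Module.finrank ℝ (P 1) ≤ 1 :=
        Nat.lt_succ_iff.mp (lt_of_le_of_ne cap1 hp1)
      -- the four remaining eliminations
      have hK3 : Module.finrank ℝ (P 2) = 1 → Module.finrank ℝ (P (-3)) = 2 → False := by
        intro h2 h3
        have hfull2 : g 2 ≤ b.toSubmodule := full_of 2 fd2 (by rw [hG2.dim2, h2])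
        have hfullm3 : g (-3) ≤ b.toSubmodule := full_of (-3) fdm3 (by rw [hG2.dim3', h3])
        obtain ⟨u, hu2, hune⟩ := G2P.nonbot (g 2) (by rw [hG2.dim2]; norm_num)
        obtain ⟨w1, w2, hw1, hw2, hwind, _⟩ := G2P.pair_basis (g (-3)) hG2.dim3'
        have ht1 : ⁅u, w1⁆ ∈ P (-1) := Submodule.mem_inf.mpr
          ⟨b.lie_mem (hfull2 hu2) (hfullm3 hw1), G2P.br hG2 (by norm_num) hu2 hw1⟩
        have ht2 : ⁅u, w2⁆ ∈ P (-1) := Submodule.mem_inf.mpr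
          ⟨b.lie_mem (hfull2 hu2) (hfullm3 hw2), G2P.br hG2 (by norm_num) hu2 hw2⟩
        have hli : LinearIndependent ℝ ![⁅u, w1⁆, ⁅u, w2⁆] := by
          rw [Fintype.linearIndependent_iff]
          intro t ht
          rw [Fin.sum_univ_two] at ht
          simp only [Matrix.cons_val_zero, Matrix.cons_val_one, Matrix.head_cons] at ht
          have hcomb : ⁅u, t 0 • w1 + t 1 • w2⁆ = 0 := by
            rw [lie_add, lie_smul, lie_smul]; exact ht
          have hmemw : t 0 • w1 + t 1 • w2 ∈ g (-3) :=
            add_mem (Submodule.smul_mem _ _ hw1) (Submodule.smul_mem _ _ hw2)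
          have hzero := G2P.Rs hG2 hu2 hune hmemw hcomb
          obtain ⟨e1, e2⟩ := hwind _ _ hzero
          intro i
          fin_cases i
          · exact e1
          · exact e2
        have hspan : Submodule.span ℝ (Set.range ![⁅u, w1⁆, ⁅u, w2⁆]) ≤ P (-1) := by
          rw [Submodule.span_le]
          intro z hz
          obtain ⟨i, rfl⟩ := Set.mem_range.mp hz
          fin_cases i
          · exact ht1
          · exact ht2
        have h2le := Submodule.finrank_mono hspan
        rw [finrank_span_eq_card hli] at h2le
        simp only [Fintype.card_fin] at h2le
        omega
      have hK4 : Module.finrank ℝ (P (-2)) = 1 → Module.finrank ℝ (P 3) = 2 → False := by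
        intro h2 h3
        have hfullm2 : g (-2) ≤ b.toSubmodule := full_of (-2) fdm2 (by rw [hG2.dim2', h2])
        have hfull3 : g 3 ≤ b.toSubmodule := full_of 3 fd3 (by rw [hG2.dim3, h3])
        obtain ⟨v, hv2, hvne⟩ := G2P.nonbot (g (-2)) (by rw [hG2.dim2']; norm_num)
        obtain ⟨w1, w2, hw1, hw2, hwind, _⟩ := G2P.pair_basis (g 3) hG2.dim3
        have ht1 : ⁅v, w1⁆ ∈ P 1 := Submodule.mem_inf.mpr
          ⟨b.lie_mem (hfullm2 hv2) (hfull3 hw1), G2P.br hG2 (by norm_num) hv2 hw1⟩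
        have ht2 : ⁅v, w2⁆ ∈ P 1 := Submodule.mem_inf.mpr
          ⟨b.lie_mem (hfullm2 hv2) (hfull3 hw2), G2P.br hG2 (by norm_num) hv2 hw2⟩
        have hli : LinearIndependent ℝ ![⁅v, w1⁆, ⁅v, w2⁆] := by
          rw [Fintype.linearIndependent_iff]
          intro t ht
          rw [Fin.sum_univ_two] at ht
          simp only [Matrix.cons_val_zero, Matrix.cons_val_one, Matrix.head_cons] at ht
          have hcomb : ⁅v, t 0 • w1 + t 1 • w2⁆ = 0 := by
            rw [lie_add, lie_smul, lie_smul]; exact ht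
          have hmemw : t 0 • w1 + t 1 • w2 ∈ g 3 :=
            add_mem (Submodule.smul_mem _ _ hw1) (Submodule.smul_mem _ _ hw2)
          have hzero := G2P.Rs' hG2 hv2 hvne hmemw hcomb
          obtain ⟨e1, e2⟩ := hwind _ _ hzero
          intro i
          fin_cases i
          · exact e1
          · exact e2
        have hspan : Submodule.span ℝ (Set.range ![⁅v, w1⁆, ⁅v, w2⁆]) ≤ P 1 := by
          rw [Submodule.span_le]
          intro z hz
          obtain ⟨i, rfl⟩ := Set.mem_range.mp hz
          fin_cases i
          · exact ht1
          · exact ht2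
        have h2le := Submodule.finrank_mono hspan
        rw [finrank_span_eq_card hli] at h2le
        simp only [Fintype.card_fin] at h2le
        omega
      have hdisj : (Module.finrank ℝ (P 2) = 1 ∧ Module.finrank ℝ (P (-3)) = 2) ∨
          (Module.finrank ℝ (P (-2)) = 1 ∧ Module.finrank ℝ (P 3) = 2) ∨
          (Module.finrank ℝ (P 0) = 4 ∧ Module.finrank ℝ (P (-1)) = 1) ∨
          (Module.finrank ℝ (P 0) = 4 ∧ Module.finrank ℝ (P 1) = 1) := by
        omega
      rcases hdisj with ⟨ha', hb'⟩ | ⟨ha', hb'⟩ | ⟨ha', hb'⟩ | ⟨ha', hb'⟩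
      · exact hK3 ha' hb'
      · exact hK4 ha' hb'
      · exact hline1' (full_of 0 fd0 (by rw [hG2.dim0, ha'])) hb'
      · exact hline1 (full_of 0 fd0 (by rw [hG2.dim0, ha'])) hb'
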